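/- Let L_n ⊆ S_n be a zigzag language with n ≥ 1. For the last permutation π of the sequence J(L_n), we have s_{n,n}^π = 1. -/

import Mathlib

/-!
Shared definitions: permutations in one-line notation as lists of naturals,
deletion `p`, insertion `c_i`, zigzag languages, the Gray code sequence `J(L_n)`,
jumps, minimal jumps, the auxiliary sequences `s_n^π`, Algorithm M,
vincular pattern containment and 2-clumped permutations.
-/

/-- `S_n`: permutations of `{1,…,n}` in one-line notation, as lists of naturals. -/
def SymmList (n : ℕ) : Set (List ℕ) := {l | List.Perm l (List.range' 1 n)}

/-- The identity permutation `id_n = 1 2 ⋯ n`. -/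
def idPerm (n : ℕ) : List ℕ := List.range' 1 n

/-- `p(π)`: delete the largest entry `n = π.length` from the permutation `π ∈ S_n`. -/
def pdel (l : List ℕ) : List ℕ := l.erase l.length

/-- `c_i(π)`: insert the new largest value `π.length + 1` at (1-indexed) position `i`. -/
def cins (i : ℕ) (l : List ℕ) : List ℕ :=
  l.take (i - 1) ++ (l.length + 1) :: l.drop (i - 1)

/-- Zigzag languages of permutations: `L_0 = {ε}` is a zigzag language, and
`L ⊆ S_{n+1}` is a zigzag language if `p(L)` is a zigzag language and
`c_1(π), c_{n+1}(π) ∈ L` for every `π ∈ p(L)`. -/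
inductive IsZigzag : ℕ → Set (List ℕ) → Prop
  | zero : IsZigzag 0 {[]}
  | succ (n : ℕ) (L : Set (List ℕ)) :
      L ⊆ SymmList (n + 1) →
      IsZigzag n (pdel '' L) →
      (∀ l ∈ pdel '' L, cins 1 l ∈ L ∧ cins (n + 1) l ∈ L) →
      IsZigzag (n + 1) L

/-- `→c(π)`: the sequence of those `c_1(π),…,c_n(π)` lying in `L`,
in increasing order of the insertion position. -/
noncomputable def cSeq (L : Set (List ℕ)) (n : ℕ) (l : List ℕ) : List (List ℕ) :=
  ((List.range' 1 n).map (fun i => cins i l)).filter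
    (fun x => @decide (x ∈ L) (Classical.propDecidable _))

/-- The Gray code sequence `J(L_n)` of a language `L ⊆ S_n`:
`J(L_0) = ε`, and `J(L_{n+1})` is obtained from `J(L_n)` (for the language
`p(L)`) by replacing its entries alternately by `←c(π)` (the reverse of
`→c(π)`) and `→c(π)`. -/
noncomputable def Jseq : ℕ → Set (List ℕ) → List (List ℕ)
  | 0, _ => [[]]
  | (n + 1), L =>
      (((Jseq n (pdel '' L)).mapIdx
        (fun k π => if k % 2 = 0 then (cSeq L (n + 1) π).reverse
                    else cSeq L (n + 1) π)).flatten)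

/-- `ρ` is obtained from `π` by a right jump of the value `v` by `d` steps. -/
def RightJump (π ρ : List ℕ) (v d : ℕ) : Prop :=
  0 < d ∧ ∃ A B C : List ℕ, B.length = d ∧ (∀ x ∈ B, x < v) ∧
    π = A ++ v :: (B ++ C) ∧ ρ = A ++ (B ++ v :: C)

/-- `ρ` is obtained from `π` by a left jump of the value `v` by `d` steps. -/
def LeftJump (π ρ : List ℕ) (v d : ℕ) : Prop := RightJump ρ π v d

/-- A right jump that is minimal with respect to `L`: every right jump of the
same value by fewer steps yields a permutation not in `L`. -/
def MinimalRightJump (L : Set (List ℕ)) (π ρ : List ℕ) (v d : ℕ) : Prop :=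
  RightJump π ρ v d ∧ ∀ d' ρ', d' < d → RightJump π ρ' v d' → ρ' ∉ L

/-- A left jump that is minimal with respect to `L`. -/
def MinimalLeftJump (L : Set (List ℕ)) (π ρ : List ℕ) (v d : ℕ) : Prop :=
  LeftJump π ρ v d ∧ ∀ d' ρ', d' < d → LeftJump π ρ' v d' → ρ' ∉ L

/-- The auxiliary sequence `s_n^π` of a permutation `π` occurring in `J(L_n)`,
as a function of the index `i ∈ {1,…,n}` (value `0` outside this range). -/
noncomputable def sVec : ℕ → Set (List ℕ) → List ℕ → ℕ → ℕ
  | 0, _, _, _ => 0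
  | 1, _, _, i => if i = 1 then 1 else 0
  | (n + 2), L, π, i =>
      let L' := pdel '' L
      let π' := pdel π
      let cbar := if ((Jseq (n + 1) L').idxOf π') % 2 = 0
                  then (cSeq L (n + 2) π').reverse else cSeq L (n + 2) π'
      if cbar.getLast? = some π then
        (if i ≤ n then sVec (n + 1) L' π' i
         else if i = n + 1 then n + 1
         else if i = n + 2 then sVec (n + 1) L' π' (n + 1) else 0)
      else
        (if i ≤ n + 1 then sVec (n + 1) L' π' i
         else if i = n + 2 then n + 2 else 0)

/-- `j` is at the first position of `l`, or the entry immediately left of `j`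
in `l` is larger than `j`. -/
def AtLeftTurn (l : List ℕ) (j : ℕ) : Prop :=
  ∃ A B : List ℕ, l = A ++ j :: B ∧ (A = [] ∨ ∃ x, A.getLast? = some x ∧ j < x)

/-- `j` is at the last position of `l`, or the entry immediately right of `j`
in `l` is larger than `j`. -/
def AtRightTurn (l : List ℕ) (j : ℕ) : Prop :=
  ∃ A B : List ℕ, l = A ++ j :: B ∧ (B = [] ∨ ∃ x, B.head? = some x ∧ j < x)

/-- `j` is not at the first position of `l`, and the entry immediately left of
`j` in `l` is smaller than `j`. -/
def SmallerLeftNeighbor (l : List ℕ) (j : ℕ) : Prop :=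
  ∃ A B : List ℕ, ∃ x, l = A ++ j :: B ∧ A.getLast? = some x ∧ x < j

/-- `j` is not at the last position of `l`, and the entry immediately right of
`j` in `l` is smaller than `j`. -/
def SmallerRightNeighbor (l : List ℕ) (j : ℕ) : Prop :=
  ∃ A B : List ℕ, ∃ x, l = A ++ j :: B ∧ B.head? = some x ∧ x < j

/-- A state of Algorithm M: the current permutation `π` and the auxiliary
arrays `o` and `s`; `o j = false` encodes direction `L` (left) and
`o j = true` encodes `R` (right). -/
structure MState where
  perm : List ℕ
  o : ℕ → Bool
  s : ℕ → ℕ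

/-- The initial state of Algorithm M (step M1): `π = id_n`, `o_j = L`, `s_j = j`. -/
def MInit (n : ℕ) : MState := ⟨idPerm n, fun _ => false, fun j => j⟩

/-- One iteration (steps M3–M5) of Algorithm M on a language `L ⊆ S_n`:
with `j := s_n ≠ 1`, the permutation jumps minimally in the direction `o_j`
(step M4), and the arrays `o`, `s` are updated as in step M5. -/
def MStep (L : Set (List ℕ)) (n : ℕ) (σ σ' : MState) : Prop :=
  σ.s n ≠ 1 ∧
  σ'.perm ∈ L ∧
  ((σ.o (σ.s n) = false ∧ ∃ d, MinimalLeftJump L σ.perm σ'.perm (σ.s n) d) ∨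
   (σ.o (σ.s n) = true ∧ ∃ d, MinimalRightJump L σ.perm σ'.perm (σ.s n) d)) ∧
  (((σ.o (σ.s n) = false ∧ AtLeftTurn σ'.perm (σ.s n)) ∨
    (σ.o (σ.s n) = true ∧ AtRightTurn σ'.perm (σ.s n))) →
      σ'.o = Function.update σ.o (σ.s n) (!σ.o (σ.s n)) ∧
      σ'.s = Function.update (Function.update (Function.update σ.s n n) (σ.s n)
               ((Function.update σ.s n n) (σ.s n - 1))) (σ.s n - 1) (σ.s n - 1)) ∧
  (¬ ((σ.o (σ.s n) = false ∧ AtLeftTurn σ'.perm (σ.s n)) ∨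
      (σ.o (σ.s n) = true ∧ AtRightTurn σ'.perm (σ.s n))) →
      σ'.o = σ.o ∧ σ'.s = Function.update σ.s n n)

/-- `π` contains the vincular pattern `pat` whose marked adjacent pair starts
at (0-indexed) position `k` of `pat`. -/
def ContainsVincular (π pat : List ℕ) (k : ℕ) : Prop :=
  ∃ f : ℕ → ℕ, StrictMonoOn f (Set.Iio pat.length) ∧
    (∀ i < pat.length, f i < π.length) ∧
    f (k + 1) = f k + 1 ∧
    (∀ i < pat.length, ∀ j < pat.length,
      (pat.getD i 0 < pat.getD j 0 ↔ π.getD (f i) 0 < π.getD (f j) 0))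

/-- 2-clumped permutations: those avoiding the vincular patterns
`3(51)24`, `3(51)42`, `24(51)3` and `42(51)3`. -/
def TwoClumped (π : List ℕ) : Prop :=
  ¬ ContainsVincular π [3, 5, 1, 2, 4] 1 ∧ ¬ ContainsVincular π [3, 5, 1, 4, 2] 1 ∧
  ¬ ContainsVincular π [2, 4, 5, 1, 3] 2 ∧ ¬ ContainsVincular π [4, 2, 5, 1, 3] 2

/-- `S'_n`: the set of 2-clumped permutations in `S_n`. -/
def SClump (n : ℕ) : Set (List ℕ) := {l ∈ SymmList n | TwoClumped l}

/-- `B_n`: the permutations obtained from `1` by repeatedly inserting the new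
largest value at the first or the last position. -/
def Bset : ℕ → Set (List ℕ)
  | 0 => {[]}
  | 1 => {[1]}
  | (n + 2) => {l | ∃ π ∈ Bset (n + 1), l = cins 1 π ∨ l = cins (n + 2) π}

-- auxiliary lemmas
lemma symmList_bounds {m : ℕ} {l : List ℕ} (h : l ∈ SymmList m) :
    l.length = m ∧ ∀ x ∈ l, x < m + 1 := by
  have hp : l.Perm (List.range' 1 m) := h
  refine ⟨hp.length_eq.trans (List.length_range' ..), fun x hx => ?_⟩
  have := hp.mem_iff.mp hx
  rw [List.mem_range'] at this
  obtain ⟨i, hi, rfl⟩ := this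
  omega

lemma cins_length (i : ℕ) (σ : List ℕ) : (cins i σ).length = σ.length + 1 := by
  simp [cins, List.length_append, List.length_take, List.length_drop]
  omega

lemma pdel_cins {m i : ℕ} {σ : List ℕ} (hσ : σ ∈ SymmList m) : pdel (cins i σ) = σ := by
  obtain ⟨hlen, hmem⟩ := symmList_bounds hσ
  have hv : (σ.length + 1) ∉ σ.take (i - 1) := by
    intro h
    have := hmem _ (List.take_subset _ _ h)
    omega
  unfold pdel
  rw [cins_length, cins, List.erase_append_right _ hv, List.erase_cons_head,
    List.take_append_drop]

lemma mem_cSeq {L : Set (List ℕ)} {n : ℕ} {σ x : List ℕ} (h : x ∈ cSeq L n σ) :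
    x ∈ L ∧ ∃ i, 1 ≤ i ∧ i ≤ n ∧ x = cins i σ := by
  rw [cSeq, List.mem_filter] at h
  obtain ⟨h1, h2⟩ := h
  refine ⟨@of_decide_eq_true _ (Classical.propDecidable _) h2, ?_⟩
  rw [List.mem_map] at h1
  obtain ⟨i, hi, rfl⟩ := h1
  rw [List.mem_range'] at hi
  obtain ⟨k, hk, rfl⟩ := hi
  exact ⟨1 + 1 * k, by omega, by omega, rfl⟩

lemma cins_one_mem_cSeq {L : Set (List ℕ)} {n : ℕ} {σ : List ℕ}
    (h : cins 1 σ ∈ L) (hn : 1 ≤ n) : cins 1 σ ∈ cSeq L n σ := by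
  rw [cSeq, List.mem_filter]
  refine ⟨List.mem_map.mpr ⟨1, ?_, rfl⟩, @decide_eq_true _ (Classical.propDecidable _) h⟩
  rw [List.mem_range']
  exact ⟨0, by omega, by omega⟩

lemma indexOf_cins {i : ℕ} {σ : List ℕ} (hi : 1 ≤ i) (hi2 : i ≤ σ.length + 1)
    (hmem : ∀ x ∈ σ, x < σ.length + 1) :
    (cins i σ).idxOf (σ.length + 1) = i - 1 := by
  have hv : (σ.length + 1) ∉ σ.take (i - 1) := by
    intro h
    have := hmem _ (List.take_subset _ _ h)
    omega
  rw [cins, List.idxOf_append_of_notMem hv, List.idxOf_cons_self,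
    List.length_take, Nat.min_eq_left (by omega)]
  omega

lemma cSeq_nodup {L : Set (List ℕ)} {m : ℕ} {σ : List ℕ} (hσ : σ ∈ SymmList m) :
    (cSeq L (m + 1) σ).Nodup := by
  obtain ⟨hlen, hmem⟩ := symmList_bounds hσ
  apply List.Nodup.filter
  apply List.Nodup.map_on _ (List.nodup_range' (s := 1) (n := m + 1))
  intro i hi j hj hij
  rw [List.mem_range'] at hi hj
  obtain ⟨a, ha, rfl⟩ := hi
  obtain ⟨b, hb, rfl⟩ := hj
  have h1 := indexOf_cins (i := 1 + 1 * a) (σ := σ) (by omega) (by omega)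
    (by rw [hlen]; exact hmem)
  have h2 := indexOf_cins (i := 1 + 1 * b) (σ := σ) (by omega) (by omega)
    (by rw [hlen]; exact hmem)
  rw [hij, h2] at h1
  omega

lemma zigzag_subset {n : ℕ} {L : Set (List ℕ)} (h : IsZigzag n L) : L ⊆ SymmList n := by
  cases h with
  | zero =>
    rintro l rfl
    exact List.Perm.refl _
  | succ n L hsub _ _ => exact hsub

lemma block_mem {L : Set (List ℕ)} {n : ℕ} {J : List (List ℕ)} {b : List (List ℕ)}
    (hb : b ∈ J.mapIdx (fun k τ => if k % 2 = 0 then (cSeq L n τ).reverse else cSeq L n τ)) :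
    ∃ τ ∈ J, b = (cSeq L n τ).reverse ∨ b = cSeq L n τ := by
  rw [List.mem_mapIdx] at hb
  obtain ⟨i, hi, hb⟩ := hb
  refine ⟨J[i], List.getElem_mem _, ?_⟩
  by_cases h : i % 2 = 0
  · left; rw [← hb, if_pos h]
  · right; rw [← hb, if_neg h]

lemma Jseq_mem {n : ℕ} {L : Set (List ℕ)} (hz : IsZigzag n L) :
    ∀ π ∈ Jseq n L, π ∈ L := by
  cases hz with
  | zero =>
    intro π hπ
    simp only [Jseq, List.mem_singleton] at hπ
    simp [hπ]
  | succ n L hsub hz' hcl =>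
    intro π hπ
    rw [Jseq, List.mem_flatten] at hπ
    obtain ⟨b, hb, hπb⟩ := hπ
    obtain ⟨τ, _, hb'⟩ := block_mem hb
    rcases hb' with rfl | rfl
    · exact (mem_cSeq (List.mem_reverse.mp hπb)).1
    · exact (mem_cSeq hπb).1

lemma Jseq_succ_decomp {n : ℕ} {L : Set (List ℕ)}
    (hz : IsZigzag (n + 1) L) (hne : Jseq n (pdel '' L) ≠ []) :
    ∃ σ : List ℕ,
      (Jseq n (pdel '' L)).getLast? = some σ ∧
      σ ∈ pdel '' L ∧
      Jseq (n + 1) L =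
        ((Jseq n (pdel '' L)).dropLast.mapIdx
          (fun k τ => if k % 2 = 0 then (cSeq L (n + 1) τ).reverse else cSeq L (n + 1) τ)).flatten
        ++ (if ((Jseq n (pdel '' L)).length - 1) % 2 = 0
            then (cSeq L (n + 1) σ).reverse else cSeq L (n + 1) σ) ∧
      cSeq L (n + 1) σ ≠ [] := by
  cases hz with
  | succ n L hsub hz' hcl =>
    set J' := Jseq n (pdel '' L) with hJ'
    refine ⟨J'.getLast hne, List.getLast?_eq_getLast hne, ?_, ?_, ?_⟩
    · exact Jseq_mem hz' _ (List.getLast_mem hne)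
    · conv_lhs => rw [Jseq, ← hJ', ← List.dropLast_append_getLast hne]
      rw [List.mapIdx_append, List.flatten_append]
      congr 1
      simp [List.length_dropLast]
    · have h1 : cins 1 (J'.getLast hne) ∈ L :=
        (hcl _ (Jseq_mem hz' _ (List.getLast_mem hne))).1
      exact List.ne_nil_of_mem (cins_one_mem_cSeq h1 (by omega))

lemma Jseq_ne_nil {n : ℕ} {L : Set (List ℕ)} (hz : IsZigzag n L) : Jseq n L ≠ [] := by
  induction hz with
  | zero => simp [Jseq]
  | succ n L hsub hz' hcl ih =>
    obtain ⟨σ, _, _, hJeq, hcne⟩ := Jseq_succ_decomp (IsZigzag.succ n L hsub hz' hcl) ih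
    rw [hJeq]
    intro h
    rcases List.append_eq_nil_iff.mp h with ⟨-, h2⟩
    by_cases hp : ((Jseq n (pdel '' L)).length - 1) % 2 = 0
    · rw [if_pos hp] at h2; exact hcne (by simpa using h2)
    · rw [if_neg hp] at h2; exact hcne h2

lemma getLast_not_mem_dropLast {α : Type*} {l : List α} (h : l ≠ []) (hn : l.Nodup) :
    l.getLast h ∉ l.dropLast := by
  intro hm
  rw [← List.dropLast_append_getLast h, List.nodup_append'] at hn
  exact hn.2.2 hm (List.mem_singleton.mpr rfl)

lemma indexOf_cons_self' {α : Type*} [BEq α] [LawfulBEq α] (a : α) (l : List α) :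
    (a :: l).idxOf a = 0 := by
  simp [List.idxOf_cons]

lemma indexOf_append' {α : Type*} [BEq α] [LawfulBEq α] {a : α} {l₁ : List α} (l₂ : List α)
    (h : a ∉ l₁) : (l₁ ++ l₂).idxOf a = l₁.length + l₂.idxOf a := by
  induction l₁ with
  | nil => simp
  | cons b t ihl =>
    simp only [List.cons_append, List.idxOf_cons]
    have hb : (b == a) = false := by
      simp only [beq_eq_false_iff_ne]; rintro rfl; exact h List.mem_cons_self
    simp [hb, ihl (fun hm => h (List.mem_cons_of_mem _ hm))]
    omega

lemma indexOf_getLast_eq {α : Type*} [BEq α] [LawfulBEq α] {l : List α} {a : α} (h : l.getLast? = some a)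
    (hnd : a ∉ l.dropLast) : l.idxOf a = l.length - 1 := by
  have hne : l ≠ [] := by rintro rfl; simp at h
  rw [List.getLast?_eq_getLast hne, Option.some_inj] at h
  have key : l.dropLast ++ [a] = l := by
    rw [← h]; exact List.dropLast_append_getLast hne
  conv_lhs => rw [← key]
  rw [indexOf_append' _ hnd, indexOf_cons_self']
  simp [List.length_dropLast]

lemma Jseq_last_not_dropLast {n : ℕ} {L : Set (List ℕ)} (hz : IsZigzag n L) :
    ∀ {π : List ℕ}, (Jseq n L).getLast? = some π → π ∉ (Jseq n L).dropLast := by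
  induction hz with
  | zero =>
    intro π h hm
    simp [Jseq] at hm
  | succ n L hsub hz' hcl ih =>
    intro π hπ hm
    have hz : IsZigzag (n + 1) L := IsZigzag.succ n L hsub hz' hcl
    obtain ⟨σ, hσlast, hσmem, hJeq, hcne⟩ := Jseq_succ_decomp hz (Jseq_ne_nil hz')
    set b := (if ((Jseq n (pdel '' L)).length - 1) % 2 = 0
        then (cSeq L (n + 1) σ).reverse else cSeq L (n + 1) σ) with hbdef
    have hσS : σ ∈ SymmList n := zigzag_subset hz' hσmem
    have hbnodup : b.Nodup := by
      rw [hbdef]; split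
      · exact List.nodup_reverse.mpr (cSeq_nodup hσS)
      · exact cSeq_nodup hσS
    have hbne : b ≠ [] := by
      rw [hbdef]; split
      · simpa using hcne
      · exact hcne
    have hbsub : ∀ x ∈ b, x ∈ cSeq L (n + 1) σ := by
      intro x hx; rw [hbdef] at hx
      split at hx
      · exact List.mem_reverse.mp hx
      · exact hx
    rw [hJeq, List.getLast?_append, List.getLast?_eq_getLast hbne] at hπ
    rw [show ∀ (o : Option (List ℕ)), (some (b.getLast hbne)).or o = some (b.getLast hbne)
      from fun _ => rfl, Option.some_inj] at hπ
    have hdrop : ((((Jseq n (pdel '' L)).dropLast.mapIdx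
          (fun k τ => if k % 2 = 0 then (cSeq L (n + 1) τ).reverse
            else cSeq L (n + 1) τ)).flatten) ++ b).dropLast
        = (((Jseq n (pdel '' L)).dropLast.mapIdx
          (fun k τ => if k % 2 = 0 then (cSeq L (n + 1) τ).reverse
            else cSeq L (n + 1) τ)).flatten) ++ b.dropLast := by
      rw [List.dropLast_append]
      simp [hbne]
    rw [hJeq, hdrop] at hm
    rcases List.mem_append.mp hm with h1 | h2
    · obtain ⟨blk, hblk, hπblk⟩ := List.mem_flatten.mp h1
      obtain ⟨τ, hτ, hblk'⟩ := block_mem hblk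
      have hπτ : π ∈ cSeq L (n + 1) τ := by
        rcases hblk' with rfl | rfl
        · exact List.mem_reverse.mp hπblk
        · exact hπblk
      obtain ⟨-, i, -, -, hπi⟩ := mem_cSeq hπτ
      have hτS : τ ∈ SymmList n :=
        zigzag_subset hz' (Jseq_mem hz' _ (List.dropLast_subset _ hτ))
      have hπb : π ∈ cSeq L (n + 1) σ := by
        apply hbsub
        rw [← hπ]
        exact List.getLast_mem hbne
      obtain ⟨-, j, -, -, hπj⟩ := mem_cSeq hπb
      have hτσ : τ = σ := by
        have h1 : pdel π = τ := by rw [hπi]; exact pdel_cins hτS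
        have h2 : pdel π = σ := by rw [hπj]; exact pdel_cins hσS
        rw [← h1, h2]
      rw [hτσ] at hτ
      exact ih hσlast hτ
    · have : π ∉ b.dropLast := by
        rw [← hπ]
        exact getLast_not_mem_dropLast hbne hbnodup
      exact this h2

lemma sVec_last_aux : ∀ n : ℕ, 1 ≤ n → ∀ L : Set (List ℕ), IsZigzag n L →
    ∀ π : List ℕ, (Jseq n L).getLast? = some π → sVec n L π n = 1 := by
  intro n
  induction n with
  | zero => omega
  | succ k ih =>
    cases k with
    | zero => intro _ L hL π hπ; simp [sVec]
    | succ m =>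
      intro _ L hL π hπ
      have hz' : IsZigzag (m + 1) (pdel '' L) := by cases hL with | succ _ _ _ h _ => exact h
      obtain ⟨σ, hσlast, hσmem, hJeq, hcne⟩ := Jseq_succ_decomp hL (Jseq_ne_nil hz')
      set b := (if ((Jseq (m + 1) (pdel '' L)).length - 1) % 2 = 0
          then (cSeq L (m + 2) σ).reverse else cSeq L (m + 2) σ) with hbdef
      have hσS : σ ∈ SymmList (m + 1) := zigzag_subset hz' hσmem
      have hbne : b ≠ [] := by
        rw [hbdef]; split
        · simpa using hcne
        · exact hcne
      have hbsub : ∀ x ∈ b, x ∈ cSeq L (m + 2) σ := by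
        intro x hx; rw [hbdef] at hx
        split at hx
        · exact List.mem_reverse.mp hx
        · exact hx
      rw [hJeq, List.getLast?_append, List.getLast?_eq_getLast hbne] at hπ
      rw [show ∀ (o : Option (List ℕ)), (some (b.getLast hbne)).or o = some (b.getLast hbne)
        from fun _ => rfl, Option.some_inj] at hπ
      have hπb : π ∈ cSeq L (m + 2) σ := by
        apply hbsub; rw [← hπ]; exact List.getLast_mem hbne
      obtain ⟨-, j, -, -, hπj⟩ := mem_cSeq hπb
      have hpd : pdel π = σ := by rw [hπj]; exact pdel_cins hσS
      have idx : (Jseq (m + 1) (pdel '' L)).idxOf σ = (Jseq (m + 1) (pdel '' L)).length - 1 :=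
        indexOf_getLast_eq hσlast (Jseq_last_not_dropLast hz' hσlast)
      have hs : sVec (m + 1) (pdel '' L) σ (m + 1) = 1 := ih (by omega) _ hz' σ hσlast
      have hblast : b.getLast? = some π := by
        rw [List.getLast?_eq_getLast hbne, hπ]
      simp only [sVec, hpd, idx]
      rw [← hbdef, if_pos hblast, if_neg (by omega), if_neg (by omega)]
      simpa using hs

/-- Let `L_n ⊆ S_n` be a zigzag language with `n ≥ 1`. For the
last permutation `π` of the sequence `J(L_n)` we have `s_{n,n}^π = 1`. -/
theorem sVec_of_last (n : ℕ) (hn : 1 ≤ n) (L : Set (List ℕ)) (hL : IsZigzag n L)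
    (π : List ℕ) (hπ : (Jseq n L).getLast? = some π) :
    sVec n L π n = 1 :=
  sVec_last_aux n hn L hL π hπ
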